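/- Let B be a topological space and U ⊆ B × B an open set with Δ(B) ⊆ U. Then U admits a continuous section s : U → P(B) of π satisfying s(b,b) = the constant path at b for every b ∈ B, if and only if U is fibrewise compressible rel the diagonal. -/

import Mathlib

open unitInterval

/-- An open subset `U ⊆ B × B` containing the diagonal admits a continuous section of
the path fibration `π : P(B) → B × B` with `s(b,b)` the constant path at `b`, if and
only if `U` is fibrewise compressible rel the diagonal. -/
theorem hasPointedPathSection_iff_fibDiagCompressibleRel (B : Type) [TopologicalSpace B]
    (U : Set (B × B)) (hU : IsOpen U) (hdiag : Set.diagonal B ⊆ U) :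
    (∃ s : C(↥U, C(I, B)),
      (∀ x : ↥U, s x 0 = (x : B × B).1 ∧ s x 1 = (x : B × B).2) ∧
      (∀ (b : B) (hb : (b, b) ∈ U) (t : I), s ⟨(b, b), hb⟩ t = b)) ↔
    (∃ H : C(↥U × I, B × B),
      (∀ x : ↥U, H (x, 0) = (x : B × B)) ∧
      (∀ x : ↥U, (H (x, 1)).1 = (H (x, 1)).2) ∧
      (∀ (x : ↥U) (t : I), (H (x, t)).2 = (x : B × B).2) ∧
      (∀ (b : B) (hb : (b, b) ∈ U) (t : I), H (⟨(b, b), hb⟩, t) = (b, b))) := by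
  constructor
  · rintro ⟨s, hends, hdiagconst⟩
    refine ⟨⟨fun p => (s p.1 p.2, (p.1 : B × B).2), ?_⟩, ?_, ?_, ?_, ?_⟩
    · have hc : Continuous (fun p : ↥U × I => (s p.1 p.2, (p.1 : B × B).2)) :=
        (s.uncurry.continuous).prodMk
        (continuous_subtype_val.comp continuous_fst |>.snd)
      exact hc
    · intro x
      simp [(hends x).1]
    · intro x
      simp [(hends x).2]
    · intro x t; rfl
    · intro b hb t
      simp [hdiagconst b hb t]
  · rintro ⟨H, h0, h1, hsnd, hdiagc⟩
    refine ⟨(ContinuousMap.comp ⟨Prod.fst, continuous_fst⟩ H).curry, ?_, ?_⟩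
    · intro x
      constructor
      · show (H (x, 0)).1 = (x : B × B).1
        rw [h0 x]
      · show (H (x, 1)).1 = (x : B × B).2
        rw [h1 x, hsnd x 1]
    · intro b hb t
      show (H (⟨(b, b), hb⟩, t)).1 = b
      rw [hdiagc b hb t]
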